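/- arXiv:1012.2062 — 7 statements merged into one kernel-verified Lean document; each statement's English description precedes it below -/
import Mathlib

section
/- For all natural numbers s and k, and all real numbers x, π ∈ [0,1] with 1 − π + xπ > 0, one has (x / (1 − π + xπ)) · ∑_{r=k}^{s} r · b_{s,r}(1 − π + xπ) = ∑_{r=0}^{s} ∑_{i=0}^{s−r} 1[r + i ≥ k] · r · b_{s,r}(x) · b_{s−r,i}(1 − π). -/
/-- Binomial probability `b_{s,r}(p) = (s choose r) p^r (1-p)^(s-r)`. -/
noncomputable def binomProb (s r : ℕ) (p : ℝ) : ℝ :=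
  (s.choose r : ℝ) * p ^ r * (1 - p) ^ (s - r)

lemma sum_r_choose_mul (m : ℕ) (a b : ℝ) :
    ∑ r ∈ Finset.range (m + 1), (r : ℝ) * (m.choose r : ℝ) * a ^ r * b ^ (m - r)
      = (m : ℝ) * a * (a + b) ^ (m - 1) := by
  cases m with
  | zero => simp
  | succ n =>
    rw [Finset.sum_range_succ']
    simp only [Nat.cast_zero, zero_mul, mul_zero, zero_mul, add_zero]
    have key : ∀ j ∈ Finset.range (n + 1),
        ((j + 1 : ℕ) : ℝ) * ((n+1).choose (j+1) : ℝ) * a ^ (j+1) * b ^ (n + 1 - (j+1))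
          = ((n:ℝ)+1) * a * (a ^ j * b ^ (n - j) * (n.choose j : ℝ)) := by
      intro j _
      have h : (n + 1) * n.choose j = (n+1).choose (j+1) * (j+1) := Nat.add_one_mul_choose_eq n j
      have h' : ((n:ℝ) + 1) * (n.choose j : ℝ) = ((n+1).choose (j+1) : ℝ) * ((j:ℝ)+1) := by
        exact_mod_cast congrArg (Nat.cast : ℕ → ℝ) h
      have : n + 1 - (j + 1) = n - j := by omega
      rw [this]
      push_cast
      linear_combination (- a ^ (j+1) * b ^ (n - j)) * h'
    rw [Finset.sum_congr rfl key, ← Finset.mul_sum, ← add_pow]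
    push_cast
    ring

lemma key_conv (s m : ℕ) (hm : m ≤ s) (x π q : ℝ) (hq : q = 1 - π + x * π) (hq0 : q ≠ 0) :
    ∑ r ∈ Finset.range (m + 1), (r : ℝ) * binomProb s r x * binomProb (s - r) (m - r) (1 - π)
      = (x / q) * (m : ℝ) * binomProb s m q := by
  have step : ∀ r ∈ Finset.range (m + 1),
      (r : ℝ) * binomProb s r x * binomProb (s - r) (m - r) (1 - π)
        = (s.choose m : ℝ) * ((1 - x) * π) ^ (s - m) *
            ((r : ℝ) * (m.choose r : ℝ) * x ^ r * ((1 - x) * (1 - π)) ^ (m - r)) := by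
    intro r hr
    have hr' : r ≤ m := by simpa using Nat.lt_succ_iff.mp (Finset.mem_range.mp hr)
    have hc : (s.choose m : ℝ) * (m.choose r : ℝ)
        = (s.choose r : ℝ) * ((s - r).choose (m - r) : ℝ) := by
      exact_mod_cast congrArg (Nat.cast : ℕ → ℝ) (Nat.choose_mul (n := s) hr')
    have h1 : s - r - (m - r) = s - m := by omega
    have h2 : (1 - x) ^ (s - r) = (1 - x) ^ (m - r) * (1 - x) ^ (s - m) := by
      rw [← pow_add]; congr 1; omega
    unfold binomProb
    rw [show (1:ℝ) - (1 - π) = π by ring, h1, h2, mul_pow, mul_pow]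
    linear_combination (-(r : ℝ) * x ^ r * (1 - x) ^ (m - r) * (1 - x) ^ (s - m) *
      (1 - π) ^ (m - r) * π ^ (s - m)) * hc
  rw [Finset.sum_congr rfl step, ← Finset.mul_sum, sum_r_choose_mul,
    show x + (1 - x) * (1 - π) = q by rw [hq]; ring]
  have h1q : 1 - q = (1 - x) * π := by rw [hq]; ring
  unfold binomProb
  rw [h1q]
  cases m with
  | zero => simp
  | succ n =>
    rw [Nat.add_sub_cancel, pow_succ]
    field_simp

theorem stmt0 (s k : ℕ) (x π : ℝ) (hx : x ∈ Set.Icc (0:ℝ) 1) (hπ : π ∈ Set.Icc (0:ℝ) 1)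
    (hpos : 0 < 1 - π + x * π) :
    (x / (1 - π + x * π)) * ∑ r ∈ Finset.Icc k s, (r : ℝ) * binomProb s r (1 - π + x * π) =
      ∑ r ∈ Finset.range (s + 1), ∑ i ∈ Finset.range (s - r + 1),
        (if k ≤ r + i then (1:ℝ) else 0) * (r : ℝ) * binomProb s r x * binomProb (s - r) i (1 - π) := by
  set q : ℝ := 1 - π + x * π with hq
  have hq0 : q ≠ 0 := ne_of_gt hpos
  have step1 : ∀ r ∈ Finset.range (s + 1),
      (∑ i ∈ Finset.range (s - r + 1),
        (if k ≤ r + i then (1:ℝ) else 0) * (r : ℝ) * binomProb s r x * binomProb (s - r) i (1 - π))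
      = ∑ i ∈ Finset.range (s + 1 - r),
        (if k ≤ r + i then (1:ℝ) else 0) * (r : ℝ) * binomProb s r x * binomProb (s - r) i (1 - π) := by
    intro r hr
    have : s - r + 1 = s + 1 - r := by
      have := Finset.mem_range.mp hr; omega
    rw [this]
  rw [Finset.sum_congr rfl step1, ← Finset.sum_range_diag_flip (s + 1)
    (fun r i => (if k ≤ r + i then (1:ℝ) else 0) * (r : ℝ) * binomProb s r x * binomProb (s - r) i (1 - π))]
  have step2 : ∀ m ∈ Finset.range (s + 1),
      (∑ r ∈ Finset.range (m + 1),
        (if k ≤ r + (m - r) then (1:ℝ) else 0) * (r : ℝ) * binomProb s r x * binomProb (s - r) (m - r) (1 - π))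
      = (if k ≤ m then (1:ℝ) else 0) * ((x / q) * (m : ℝ) * binomProb s m q) := by
    intro m hm
    have hms : m ≤ s := by have := Finset.mem_range.mp hm; omega
    rw [← key_conv s m hms x π q hq hq0, Finset.mul_sum]
    refine Finset.sum_congr rfl fun r hr => ?_
    have hrm : r ≤ m := by have := Finset.mem_range.mp hr; omega
    have : r + (m - r) = m := by omega
    rw [this]
    ring
  rw [Finset.sum_congr rfl step2]
  rw [show (fun m => (if k ≤ m then (1:ℝ) else 0) * ((x / q) * (m : ℝ) * binomProb s m q))
    = fun m => if k ≤ m then (x / q) * ((m : ℝ) * binomProb s m q) else 0 from funext fun m => by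
      split <;> ring]
  rw [Finset.sum_ite, Finset.sum_const_zero, add_zero, ← Finset.mul_sum]
  congr 1
  apply Finset.sum_congr
  · ext m; simp [Nat.lt_succ_iff]; omega
  · intro m _; rfl
end

section
/- Let p : ℕ → [0,∞) satisfy ∑_{s} s³ p_s < ∞, and for each s let (t_{s,ℓ})_{ℓ=0}^{s} be nonnegative reals with ∑_{ℓ=0}^{s} t_{s,ℓ} = 1. Then the function a(z) := ∑_{s=0}^∞ p_s ∑_{ℓ=0}^{s} t_{s,ℓ} ∑_{r=s−ℓ}^{s} r b_{s,r}(z) has a derivative at z = 1 within the interval [0,1], and this derivative equals ∑_{s} s(s−1) p_s t_{s,0} + ∑_{s} s p_s. -/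
noncomputable def Bd (s r : ℕ) (z : ℝ) : ℝ :=
  (s.choose r : ℝ) * ((r : ℝ) * z ^ (r - 1) * (1 - z) ^ (s - r)
    - ((s - r : ℕ) : ℝ) * z ^ r * (1 - z) ^ (s - r - 1))

lemma hasDerivAt_binomProb (s r : ℕ) (z : ℝ) :
    HasDerivAt (fun z => binomProb s r z) (Bd s r z) z := by
  have h1 : HasDerivAt (fun z : ℝ => z ^ r) ((r : ℝ) * z ^ (r - 1)) z := hasDerivAt_pow r z
  have h0 : HasDerivAt (fun z : ℝ => 1 - z) (-1) z := (hasDerivAt_id z).const_sub 1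
  have h2 := h0.pow (s - r)
  have h3 := (h1.mul h2).const_mul (s.choose r : ℝ)
  have heq : (fun z => binomProb s r z)
      = fun z : ℝ => (s.choose r : ℝ) * (z ^ r * (1 - z) ^ (s - r)) := by
    funext w; simp only [binomProb]; ring
  rw [heq]
  refine h3.congr_deriv ?_
  unfold Bd; simp only [Pi.pow_apply]; ring

lemma sum1 (s : ℕ) (z : ℝ) :
    ∑ r ∈ Finset.range (s + 1), (s.choose r : ℝ) * r * z ^ (r - 1) * (1 - z) ^ (s - r)
      = s := by
  cases s with
  | zero => simp
  | succ n =>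
    rw [Finset.sum_range_succ']
    have key : ∀ k ∈ Finset.range (n + 1),
        ((n + 1).choose (k + 1) : ℝ) * (k + 1 : ℕ) * z ^ ((k + 1) - 1) * (1 - z) ^ ((n + 1) - (k + 1))
          = ((n : ℝ) + 1) * (z ^ k * (1 - z) ^ (n - k) * (n.choose k : ℝ)) := by
      intro k hk
      have h := Nat.add_one_mul_choose_eq n k
      have h' : ((n + 1).choose (k + 1) : ℝ) * ((k + 1 : ℕ) : ℝ)
          = ((n : ℝ) + 1) * (n.choose k : ℝ) := by
        have := congrArg (Nat.cast (R := ℝ)) h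
        push_cast at this ⊢
        linarith [this]
      have e1 : (k + 1) - 1 = k := rfl
      have e2 : (n + 1) - (k + 1) = n - k := by omega
      rw [e1, e2]
      calc ((n + 1).choose (k + 1) : ℝ) * ((k + 1 : ℕ) : ℝ) * z ^ k * (1 - z) ^ (n - k)
          = (((n + 1).choose (k + 1) : ℝ) * ((k + 1 : ℕ) : ℝ)) * (z ^ k * (1 - z) ^ (n - k)) := by
            ring
        _ = ((n : ℝ) + 1) * (z ^ k * (1 - z) ^ (n - k) * (n.choose k : ℝ)) := by rw [h']; ring
    rw [Finset.sum_congr rfl key]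
    have hb : ∑ k ∈ Finset.range (n + 1), z ^ k * (1 - z) ^ (n - k) * (n.choose k : ℝ) = 1 := by
      have := add_pow z (1 - z) n
      simp only [add_sub_cancel, one_pow] at this
      rw [← this]
    rw [← Finset.mul_sum, hb]
    push_cast
    simp

lemma sum2 (s : ℕ) (z : ℝ) :
    ∑ r ∈ Finset.range (s + 1), (s.choose r : ℝ) * ((s - r : ℕ) : ℝ) * z ^ r * (1 - z) ^ (s - r - 1)
      = s := by
  have h := sum1 s (1 - z)
  rw [← Finset.sum_range_reflect] at h
  simp only [add_tsub_cancel_right] at h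
  rw [← h]
  apply Finset.sum_congr rfl
  intro j hj
  have hjs : j ≤ s := by
    simp only [Finset.mem_range] at hj; omega
  rw [Nat.choose_symm hjs, Nat.sub_sub_self hjs, sub_sub_cancel]
  ring

lemma sumb (s : ℕ) (z : ℝ) :
    ∑ r ∈ Finset.range (s + 1), binomProb s r z = 1 := by
  have := add_pow z (1 - z) s
  simp only [add_sub_cancel, one_pow] at this
  calc ∑ r ∈ Finset.range (s + 1), binomProb s r z
      = ∑ m ∈ Finset.range (s + 1), z ^ m * (1 - z) ^ (s - m) * (s.choose m : ℝ) := by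
        apply Finset.sum_congr rfl
        intro r hr
        simp only [binomProb]; ring
    _ = 1 := this.symm

lemma binomProb_nonneg (s r : ℕ) {z : ℝ} (h0 : 0 ≤ z) (h1 : z ≤ 1) :
    0 ≤ binomProb s r z := by
  unfold binomProb
  have h1z : (0:ℝ) ≤ 1 - z := by linarith
  have := Nat.cast_nonneg (α := ℝ) (s.choose r)
  positivity

lemma Gbound (s ℓ : ℕ) {z : ℝ} (h0 : 0 ≤ z) (h1 : z ≤ 1) :
    |∑ r ∈ Finset.Icc (s - ℓ) s, (r : ℝ) * Bd s r z| ≤ 2 * (s : ℝ) ^ 2 := by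
  have h1z : (0:ℝ) ≤ 1 - z := by linarith
  have step1 : |∑ r ∈ Finset.Icc (s - ℓ) s, (r : ℝ) * Bd s r z|
      ≤ ∑ r ∈ Finset.Icc (s - ℓ) s, |(r : ℝ) * Bd s r z| := Finset.abs_sum_le_sum_abs _ _
  have hsub : Finset.Icc (s - ℓ) s ⊆ Finset.range (s + 1) := by
    intro r hr
    simp only [Finset.mem_Icc] at hr
    simp only [Finset.mem_range]; omega
  have step2 : ∑ r ∈ Finset.Icc (s - ℓ) s, |(r : ℝ) * Bd s r z|
      ≤ ∑ r ∈ Finset.range (s + 1), |(r : ℝ) * Bd s r z| :=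
    Finset.sum_le_sum_of_subset_of_nonneg hsub (fun r _ _ => abs_nonneg _)
  have step3 : ∑ r ∈ Finset.range (s + 1), |(r : ℝ) * Bd s r z|
      ≤ ∑ r ∈ Finset.range (s + 1), (s : ℝ) *
        ((s.choose r : ℝ) * r * z ^ (r - 1) * (1 - z) ^ (s - r)
          + (s.choose r : ℝ) * ((s - r : ℕ) : ℝ) * z ^ r * (1 - z) ^ (s - r - 1)) := by
    apply Finset.sum_le_sum
    intro r hr
    have hrs : (r : ℝ) ≤ (s : ℝ) := by
      have : r ≤ s := by simpa [Nat.lt_succ_iff] using Finset.mem_range.mp hr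
      exact_mod_cast this
    have hT1 : (0:ℝ) ≤ (r : ℝ) * z ^ (r - 1) * (1 - z) ^ (s - r) := by positivity
    have hT2 : (0:ℝ) ≤ ((s - r : ℕ) : ℝ) * z ^ r * (1 - z) ^ (s - r - 1) := by positivity
    have hBd : |Bd s r z| ≤ (s.choose r : ℝ) * r * z ^ (r - 1) * (1 - z) ^ (s - r)
        + (s.choose r : ℝ) * ((s - r : ℕ) : ℝ) * z ^ r * (1 - z) ^ (s - r - 1) := by
      unfold Bd
      rw [abs_mul]
      rw [abs_of_nonneg (by positivity : (0:ℝ) ≤ (s.choose r : ℝ))]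
      calc (s.choose r : ℝ) * |(r : ℝ) * z ^ (r - 1) * (1 - z) ^ (s - r)
            - ((s - r : ℕ) : ℝ) * z ^ r * (1 - z) ^ (s - r - 1)|
          ≤ (s.choose r : ℝ) * ((r : ℝ) * z ^ (r - 1) * (1 - z) ^ (s - r)
            + ((s - r : ℕ) : ℝ) * z ^ r * (1 - z) ^ (s - r - 1)) := by
            apply mul_le_mul_of_nonneg_left _ (by positivity)
            rw [abs_sub_comm]
            calc _ ≤ |((s - r : ℕ) : ℝ) * z ^ r * (1 - z) ^ (s - r - 1)|
                + |(r : ℝ) * z ^ (r - 1) * (1 - z) ^ (s - r)| := abs_sub _ _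
              _ = _ := by rw [abs_of_nonneg hT1, abs_of_nonneg hT2]; ring
        _ = _ := by ring
    rw [abs_mul, abs_of_nonneg (by positivity : (0:ℝ) ≤ (r:ℝ))]
    exact mul_le_mul hrs hBd (abs_nonneg _) (Nat.cast_nonneg s)
  have step4 : ∑ r ∈ Finset.range (s + 1), (s : ℝ) *
        ((s.choose r : ℝ) * r * z ^ (r - 1) * (1 - z) ^ (s - r)
          + (s.choose r : ℝ) * ((s - r : ℕ) : ℝ) * z ^ r * (1 - z) ^ (s - r - 1))
      = 2 * (s : ℝ) ^ 2 := by
    rw [← Finset.mul_sum, Finset.sum_add_distrib, sum1, sum2]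
    ring
  linarith

lemma Bd_self (s : ℕ) : Bd s s 1 = s := by
  simp [Bd]

lemma Bd_pred (n : ℕ) : Bd (n + 1) n 1 = -((n : ℝ) + 1) := by
  have h1 : (n + 1) - n = 1 := by omega
  simp [Bd, h1, Nat.choose_succ_self_right]

lemma Bd_small (s r : ℕ) (h : r + 2 ≤ s) : Bd s r 1 = 0 := by
  have h1 : s - r ≠ 0 := by omega
  have h2 : s - r - 1 ≠ 0 := by omega
  simp [Bd, zero_pow h1, zero_pow h2]

lemma Gone (s ℓ : ℕ) (hℓ : ℓ ≤ s) :
    ∑ r ∈ Finset.Icc (s - ℓ) s, (r : ℝ) * Bd s r 1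
      = if ℓ = 0 then (s : ℝ) ^ 2 else (s : ℝ) := by
  cases ℓ with
  | zero =>
    simp [Bd_self, sq]
  | succ m =>
    obtain ⟨n, rfl⟩ : ∃ n, s = n + 1 := ⟨s - 1, by omega⟩
    simp only [Nat.succ_ne_zero, if_false]
    have hle : n + 1 - (m + 1) ≤ n + 1 := by omega
    have hle2 : n + 1 - (m + 1) ≤ n := by omega
    have e : n + 1 - (m + 1) = n - m := by omega
    rw [e]
    rw [Finset.sum_Icc_succ_top (by omega : n - m ≤ n + 1)]
    rw [Finset.sum_eq_sum_sdiff_singleton_add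
      (Finset.mem_Icc.mpr ⟨by omega, le_refl n⟩ : n ∈ Finset.Icc (n - m) n)]
    have hz : ∑ r ∈ Finset.Icc (n - m) n \ {n}, (r : ℝ) * Bd (n + 1) r 1 = 0 := by
      apply Finset.sum_eq_zero
      intro r hr
      simp only [Finset.mem_sdiff, Finset.mem_Icc, Finset.mem_singleton] at hr
      rw [Bd_small (n + 1) r (by omega)]
      ring
    rw [hz, Bd_self, Bd_pred]
    push_cast
    ring

noncomputable def Fn (p : ℕ → ℝ) (t : ℕ → ℕ → ℝ) (s : ℕ) (z : ℝ) : ℝ :=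
  p s * ∑ ℓ ∈ Finset.range (s + 1), t s ℓ * ∑ r ∈ Finset.Icc (s - ℓ) s, (r : ℝ) * binomProb s r z

noncomputable def Fd (p : ℕ → ℝ) (t : ℕ → ℕ → ℝ) (s : ℕ) (z : ℝ) : ℝ :=
  p s * ∑ ℓ ∈ Finset.range (s + 1), t s ℓ * ∑ r ∈ Finset.Icc (s - ℓ) s, (r : ℝ) * Bd s r z

lemma hasDerivAt_Fn (p : ℕ → ℝ) (t : ℕ → ℕ → ℝ) (s : ℕ) (z : ℝ) :
    HasDerivAt (Fn p t s) (Fd p t s z) z := by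
  unfold Fn Fd
  apply HasDerivAt.const_mul
  apply HasDerivAt.fun_sum
  intro ℓ hℓ
  apply HasDerivAt.const_mul
  apply HasDerivAt.fun_sum
  intro r hr
  exact (hasDerivAt_binomProb s r z).const_mul _

theorem stmt3 (p : ℕ → ℝ) (hp : ∀ s, 0 ≤ p s)
    (hp3 : Summable fun s : ℕ => (s : ℝ) ^ 3 * p s)
    (t : ℕ → ℕ → ℝ) (ht : ∀ s ℓ, 0 ≤ t s ℓ)
    (ht1 : ∀ s, ∑ ℓ ∈ Finset.range (s + 1), t s ℓ = 1) :
    HasDerivWithinAt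
      (fun z => ∑' s : ℕ, p s * ∑ ℓ ∈ Finset.range (s + 1),
        t s ℓ * ∑ r ∈ Finset.Icc (s - ℓ) s, (r : ℝ) * binomProb s r z)
      ((∑' s : ℕ, (s : ℝ) * ((s : ℝ) - 1) * p s * t s 0) + ∑' s : ℕ, (s : ℝ) * p s)
      (Set.Icc 0 1) 1 := by
  -- basic facts about t
  have htle : ∀ s ℓ, ℓ ∈ Finset.range (s + 1) → t s ℓ ≤ 1 := by
    intro s ℓ hℓ
    rw [← ht1 s]
    exact Finset.single_le_sum (fun i _ => ht s i) hℓ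
  have ht0le : ∀ s, t s 0 ≤ 1 := fun s => htle s 0 (Finset.mem_range.mpr (Nat.succ_pos s))
  -- the summand derivatives at 1
  set d : ℕ → ℝ := fun s => (s : ℝ) * ((s : ℝ) - 1) * p s * t s 0 + (s : ℝ) * p s with hd
  have hFd1 : ∀ s, Fd p t s 1 = d s := by
    intro s
    unfold Fd
    have hcong : ∀ ℓ ∈ Finset.range (s + 1),
        t s ℓ * ∑ r ∈ Finset.Icc (s - ℓ) s, (r : ℝ) * Bd s r 1
          = t s ℓ * (s : ℝ) + (if ℓ = 0 then t s ℓ * ((s : ℝ) ^ 2 - s) else 0) := by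
      intro ℓ hℓ
      rw [Gone s ℓ (by simpa [Nat.lt_succ_iff] using Finset.mem_range.mp hℓ)]
      by_cases h : ℓ = 0 <;> simp [h] <;> ring
    rw [Finset.sum_congr rfl hcong, Finset.sum_add_distrib, ← Finset.sum_mul, ht1,
      Finset.sum_ite_eq' (Finset.range (s + 1)) 0]
    simp only [Finset.mem_range, Nat.succ_pos, if_true]
    rw [hd]
    ring
  -- bound on the derivative on [0,1]
  have hFdbound : ∀ s : ℕ, ∀ z ∈ Set.Icc (0 : ℝ) 1, |Fd p t s z| ≤ 2 * (s : ℝ) ^ 2 * p s := by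
    intro s z hz
    obtain ⟨hz0, hz1⟩ := hz
    unfold Fd
    rw [abs_mul, abs_of_nonneg (hp s)]
    have : |∑ ℓ ∈ Finset.range (s + 1), t s ℓ * ∑ r ∈ Finset.Icc (s - ℓ) s, (r : ℝ) * Bd s r z|
        ≤ 2 * (s : ℝ) ^ 2 := by
      calc |∑ ℓ ∈ Finset.range (s + 1), t s ℓ * ∑ r ∈ Finset.Icc (s - ℓ) s, (r : ℝ) * Bd s r z|
          ≤ ∑ ℓ ∈ Finset.range (s + 1), |t s ℓ * ∑ r ∈ Finset.Icc (s - ℓ) s, (r : ℝ) * Bd s r z| :=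
            Finset.abs_sum_le_sum_abs _ _
        _ ≤ ∑ ℓ ∈ Finset.range (s + 1), t s ℓ * (2 * (s : ℝ) ^ 2) := by
            apply Finset.sum_le_sum
            intro ℓ hℓ
            rw [abs_mul, abs_of_nonneg (ht s ℓ)]
            exact mul_le_mul_of_nonneg_left (Gbound s ℓ hz0 hz1) (ht s ℓ)
        _ = 2 * (s : ℝ) ^ 2 := by rw [← Finset.sum_mul, ht1, one_mul]
    calc p s * |∑ ℓ ∈ Finset.range (s + 1), t s ℓ * ∑ r ∈ Finset.Icc (s - ℓ) s, (r : ℝ) * Bd s r z|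
        ≤ p s * (2 * (s : ℝ) ^ 2) := mul_le_mul_of_nonneg_left this (hp s)
      _ = 2 * (s : ℝ) ^ 2 * p s := by ring
  -- slope bound via MVT
  have hslope : ∀ s : ℕ, ∀ x ∈ Set.Icc (0 : ℝ) 1 \ {1},
      |slope (Fn p t s) 1 x| ≤ 2 * (s : ℝ) ^ 2 * p s := by
    intro s x hx
    obtain ⟨hx01, hx1⟩ := hx
    have hx1' : x ≠ 1 := hx1
    have hmvt := (convex_Icc (0:ℝ) 1).norm_image_sub_le_of_norm_hasDerivWithin_le
      (f := Fn p t s) (f' := Fd p t s)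
      (fun y hy => (hasDerivAt_Fn p t s y).hasDerivWithinAt)
      (fun y hy => by rw [Real.norm_eq_abs]; exact hFdbound s y hy)
      hx01 (Set.mem_Icc.mpr ⟨by norm_num, le_refl 1⟩)
    rw [slope_def_field, abs_div]
    rw [Real.norm_eq_abs, Real.norm_eq_abs] at hmvt
    rw [div_le_iff₀ (by simpa [abs_ne_zero, sub_ne_zero] using hx1' : 0 < |x - 1|)]
    calc |Fn p t s x - Fn p t s 1| = |Fn p t s 1 - Fn p t s x| := abs_sub_comm _ _
      _ ≤ 2 * (s:ℝ)^2 * p s * |1 - x| := hmvt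
      _ = 2 * (s:ℝ)^2 * p s * |x - 1| := by rw [abs_sub_comm]
  -- summability facts
  have hsumbound : Summable (fun s : ℕ => 2 * (s : ℝ) ^ 2 * p s) := by
    apply Summable.of_nonneg_of_le
      (fun s => by have := hp s; positivity)
      (fun s => ?_) (hp3.mul_left 2)
    rcases Nat.eq_zero_or_pos s with h | h
    · subst h; norm_num
    · have h1 : (1 : ℝ) ≤ (s : ℝ) := by exact_mod_cast h
      have := hp s
      nlinarith [mul_nonneg (mul_nonneg (sq_nonneg (s:ℝ)) (sub_nonneg.2 h1)) (hp s)]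
  have hsumA : Summable (fun s : ℕ => (s : ℝ) * ((s : ℝ) - 1) * p s * t s 0) := by
    apply Summable.of_nonneg_of_le (fun s => ?_) (fun s => ?_) hp3
    · rcases Nat.eq_zero_or_pos s with h | h
      · subst h; norm_num
      · have h1 : (1 : ℝ) ≤ (s : ℝ) := by exact_mod_cast h
        have h2 := hp s; have h3 := ht s 0
        have h5 : (0:ℝ) ≤ (s : ℝ) * ((s : ℝ) - 1) := by nlinarith
        exact mul_nonneg (mul_nonneg h5 h2) h3
    · rcases Nat.eq_zero_or_pos s with h | h
      · subst h; norm_num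
      · have h1 : (1 : ℝ) ≤ (s : ℝ) := by exact_mod_cast h
        have h2 := hp s; have h3 := ht s 0; have h4 := ht0le s
        nlinarith [mul_nonneg (mul_nonneg (mul_nonneg (le_trans zero_le_one h1) (by linarith : (0:ℝ) ≤ (s:ℝ) - 1)) h2) (by linarith : (0:ℝ) ≤ 1 - t s 0),
          mul_nonneg (mul_nonneg (le_trans zero_le_one h1) (by nlinarith : (0:ℝ) ≤ (s:ℝ)^2 - (s:ℝ) * ((s:ℝ)-1))) h2]
  have hsumB : Summable (fun s : ℕ => (s : ℝ) * p s) := by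
    apply Summable.of_nonneg_of_le (fun s => mul_nonneg (Nat.cast_nonneg s) (hp s))
      (fun s => ?_) hp3
    rcases Nat.eq_zero_or_pos s with h | h
    · subst h; norm_num
    · have h1 : (1 : ℝ) ≤ (s : ℝ) := by exact_mod_cast h
      have h2 := hp s
      have h6 : (s:ℝ) ≤ (s:ℝ) ^ 3 := by
        nlinarith [mul_nonneg (mul_nonneg (by linarith : (0:ℝ) ≤ (s:ℝ) - 1)
          (by linarith : (0:ℝ) ≤ (s:ℝ) + 1)) (by linarith : (0:ℝ) ≤ (s:ℝ))]
      exact mul_le_mul_of_nonneg_right h6 h2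
  have hsumd : Summable d := hsumA.add hsumB
  -- bound on Fn on [0,1] and summability
  have hFnbound : ∀ s : ℕ, ∀ z ∈ Set.Icc (0 : ℝ) 1, |Fn p t s z| ≤ (s : ℝ) * p s := by
    intro s z hz
    obtain ⟨hz0, hz1⟩ := hz
    unfold Fn
    have hinner : ∀ ℓ ∈ Finset.range (s + 1),
        0 ≤ ∑ r ∈ Finset.Icc (s - ℓ) s, (r : ℝ) * binomProb s r z ∧
        ∑ r ∈ Finset.Icc (s - ℓ) s, (r : ℝ) * binomProb s r z ≤ s := by
      intro ℓ hℓ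
      constructor
      · exact Finset.sum_nonneg fun r _ =>
          mul_nonneg (Nat.cast_nonneg r) (binomProb_nonneg s r hz0 hz1)
      · have hsub : Finset.Icc (s - ℓ) s ⊆ Finset.range (s + 1) := by
          intro r hr
          simp only [Finset.mem_Icc] at hr
          simp only [Finset.mem_range]; omega
        calc ∑ r ∈ Finset.Icc (s - ℓ) s, (r : ℝ) * binomProb s r z
            ≤ ∑ r ∈ Finset.range (s + 1), (r : ℝ) * binomProb s r z :=
              Finset.sum_le_sum_of_subset_of_nonneg hsub (fun r _ _ =>
                mul_nonneg (Nat.cast_nonneg r) (binomProb_nonneg s r hz0 hz1))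
          _ ≤ ∑ r ∈ Finset.range (s + 1), (s : ℝ) * binomProb s r z := by
              apply Finset.sum_le_sum
              intro r hr
              apply mul_le_mul_of_nonneg_right _ (binomProb_nonneg s r hz0 hz1)
              exact_mod_cast Nat.lt_succ_iff.mp (Finset.mem_range.mp hr)
          _ = (s : ℝ) := by rw [← Finset.mul_sum, sumb, mul_one]
    rw [abs_mul, abs_of_nonneg (hp s)]
    have habs : |∑ ℓ ∈ Finset.range (s + 1),
        t s ℓ * ∑ r ∈ Finset.Icc (s - ℓ) s, (r : ℝ) * binomProb s r z| ≤ (s : ℝ) := by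
      rw [abs_of_nonneg (Finset.sum_nonneg fun ℓ hℓ =>
        mul_nonneg (ht s ℓ) (hinner ℓ hℓ).1)]
      calc ∑ ℓ ∈ Finset.range (s + 1), t s ℓ * ∑ r ∈ Finset.Icc (s - ℓ) s, (r : ℝ) * binomProb s r z
          ≤ ∑ ℓ ∈ Finset.range (s + 1), t s ℓ * (s : ℝ) :=
            Finset.sum_le_sum fun ℓ hℓ =>
              mul_le_mul_of_nonneg_left (hinner ℓ hℓ).2 (ht s ℓ)
        _ = (s : ℝ) := by rw [← Finset.sum_mul, ht1, one_mul]
    calc p s * |∑ ℓ ∈ Finset.range (s + 1),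
          t s ℓ * ∑ r ∈ Finset.Icc (s - ℓ) s, (r : ℝ) * binomProb s r z|
        ≤ p s * (s : ℝ) := mul_le_mul_of_nonneg_left habs (hp s)
      _ = (s : ℝ) * p s := mul_comm _ _
  have hFnsummable : ∀ z ∈ Set.Icc (0 : ℝ) 1, Summable (fun s => Fn p t s z) := by
    intro z hz
    apply Summable.of_norm_bounded hsumB
    intro s
    rw [Real.norm_eq_abs]
    exact hFnbound s z hz
  -- main limit argument
  rw [show (fun z => ∑' s : ℕ, p s * ∑ ℓ ∈ Finset.range (s + 1),
      t s ℓ * ∑ r ∈ Finset.Icc (s - ℓ) s, (r : ℝ) * binomProb s r z)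
      = fun z => ∑' s : ℕ, Fn p t s z from rfl]
  have htarget : (∑' s : ℕ, (s : ℝ) * ((s : ℝ) - 1) * p s * t s 0) + ∑' s : ℕ, (s : ℝ) * p s
      = ∑' s, d s := (Summable.tsum_add hsumA hsumB).symm
  rw [htarget, hasDerivWithinAt_iff_tendsto_slope]
  have key : Filter.Tendsto (fun x => ∑' s, slope (Fn p t s) 1 x)
      (nhdsWithin 1 (Set.Icc (0:ℝ) 1 \ {1})) (nhds (∑' s, d s)) := by
    apply tendsto_tsum_of_dominated_convergence hsumbound
    · intro s
      have h1 : HasDerivWithinAt (Fn p t s) (Fd p t s 1) (Set.Icc (0:ℝ) 1) 1 :=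
        (hasDerivAt_Fn p t s 1).hasDerivWithinAt
      rw [hasDerivWithinAt_iff_tendsto_slope, hFd1 s] at h1
      exact h1
    · filter_upwards [self_mem_nhdsWithin] with x hx
      intro s
      rw [Real.norm_eq_abs]
      exact hslope s x hx
  apply key.congr'
  filter_upwards [self_mem_nhdsWithin] with x hx
  obtain ⟨hx01, hx1⟩ := hx
  have hx1' : (x : ℝ) ≠ 1 := hx1
  have hsx := hFnsummable x hx01
  have hs1 := hFnsummable 1 (Set.mem_Icc.mpr ⟨by norm_num, le_refl 1⟩)
  calc ∑' s, slope (Fn p t s) 1 x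
      = ∑' s, (Fn p t s x - Fn p t s 1) / (x - 1) := by
        apply tsum_congr; intro s; rw [slope_def_field]
    _ = (∑' s, (Fn p t s x - Fn p t s 1)) / (x - 1) := by
        rw [tsum_div_const]
    _ = ((∑' s, Fn p t s x) - ∑' s, Fn p t s 1) / (x - 1) := by
        rw [Summable.tsum_sub hsx hs1]
    _ = slope (fun z => ∑' s, Fn p t s z) 1 x := by
        rw [slope_def_field]
end

section
/- Let g : [0,1] → ℝ be continuous with g(0) ≤ 0 and g(1) = 0, and suppose g has a derivative L at 1 within [0,1] with L < 0. Then the set S := {z ∈ [0,1) : g(z) = 0} is nonempty, its supremum ξ := sup S satisfies ξ < 1 and g(ξ) = 0, and g(z) > 0 for every z ∈ (ξ, 1). -/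
theorem stmt5 (g : ℝ → ℝ) (hcont : ContinuousOn g (Set.Icc 0 1))
    (h0 : g 0 ≤ 0) (h1 : g 1 = 0)
    (L : ℝ) (hL : HasDerivWithinAt g L (Set.Icc 0 1) 1) (hLneg : L < 0) :
    {z ∈ Set.Ico (0:ℝ) 1 | g z = 0}.Nonempty ∧
    sSup {z ∈ Set.Ico (0:ℝ) 1 | g z = 0} < 1 ∧
    g (sSup {z ∈ Set.Ico (0:ℝ) 1 | g z = 0}) = 0 ∧
    ∀ z ∈ Set.Ioo (sSup {z ∈ Set.Ico (0:ℝ) 1 | g z = 0}) 1, 0 < g z := by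
  have hL' : Filter.Tendsto (slope g 1) (nhdsWithin 1 (Set.Icc 0 1 \ {1})) (nhds L) :=
    (hasDerivWithinAt_iff_tendsto_slope).mp hL
  have hev : ∀ᶠ z in nhdsWithin 1 (Set.Icc 0 1 \ {1}), slope g 1 z < 0 :=
    hL'.eventually_lt_const hLneg
  rw [eventually_nhdsWithin_iff, Metric.eventually_nhds_iff] at hev
  obtain ⟨ε, hε, hball⟩ := hev
  set b : ℝ := max (1 - ε/2) (1/2) with hbdef
  have hb1 : b < 1 := by
    apply max_lt <;> linarith
  have hb0 : (0:ℝ) < b := lt_of_lt_of_le (by norm_num) (le_max_right _ _)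
  have hpos : ∀ z, b ≤ z → z < 1 → 0 < g z := by
    intro z hz hz1
    have hzmem : z ∈ Set.Icc (0:ℝ) 1 \ {1} :=
      ⟨⟨le_trans hb0.le hz, hz1.le⟩, by simp [hz1.ne]⟩
    have hd : dist z 1 < ε := by
      rw [Real.dist_eq, abs_of_nonpos (by linarith)]
      have : 1 - ε/2 ≤ b := le_max_left _ _
      linarith
    have hs := hball hd hzmem
    rw [slope_def_field, h1, sub_zero] at hs
    have hz1' : z - 1 < 0 := by linarith
    rcases div_neg_iff.mp hs with ⟨ha, hb⟩ | ⟨ha, hb⟩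
    · exact ha
    · linarith
  have hgb : 0 < g b := hpos b le_rfl hb1
  -- the zero set
  set S : Set ℝ := {z ∈ Set.Ico (0:ℝ) 1 | g z = 0} with hSdef
  have hSsub : S ⊆ Set.Icc 0 b := by
    rintro z ⟨⟨hz0, hz1⟩, hgz⟩
    refine ⟨hz0, ?_⟩
    by_contra hc
    push_neg at hc
    have := hpos z hc.le hz1
    linarith
  have hSeq : S = Set.Icc 0 b ∩ g ⁻¹' {0} := by
    ext z
    constructor
    · intro hz
      exact ⟨hSsub hz, hz.2⟩
    · rintro ⟨⟨hz0, hzb⟩, hgz⟩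
      exact ⟨⟨hz0, lt_of_le_of_lt hzb hb1⟩, hgz⟩
  have hclosed : IsClosed S := by
    rw [hSeq]
    exact (hcont.mono (Set.Icc_subset_Icc le_rfl hb1.le)).preimage_isClosed_of_isClosed
      isClosed_Icc isClosed_singleton
  have hcompact : IsCompact S :=
    isCompact_Icc.of_isClosed_subset hclosed hSsub
  have hbdd : BddAbove S := ⟨b, fun z hz => (hSsub hz).2⟩
  have hne : S.Nonempty := by
    rcases eq_or_lt_of_le h0 with h | h
    · exact ⟨0, ⟨le_refl 0, one_pos⟩, h⟩
    · have hiv := intermediate_value_Icc hb0.le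
        (hcont.mono (Set.Icc_subset_Icc le_rfl hb1.le))
      have h0mem : (0:ℝ) ∈ Set.Icc (g 0) (g b) := ⟨h0, hgb.le⟩
      obtain ⟨c, hc, hgc⟩ := hiv h0mem
      exact ⟨c, ⟨hc.1, lt_of_le_of_lt hc.2 hb1⟩, hgc⟩
  have hsup_mem : sSup S ∈ S := hcompact.sSup_mem hne
  have hξ1 : sSup S < 1 := hsup_mem.1.2
  have hξ0 : (0:ℝ) ≤ sSup S := hsup_mem.1.1
  refine ⟨hne, hξ1, hsup_mem.2, ?_⟩
  rintro z ⟨hzl, hzr⟩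
  by_contra hc
  push_neg at hc
  rcases eq_or_lt_of_le hc with h | h
  · have hzS : z ∈ S := ⟨⟨le_trans hξ0 hzl.le, hzr⟩, h⟩
    have := le_csSup hbdd hzS
    linarith
  · have hzb : z < b := by
      by_contra hc'
      push_neg at hc'
      have := hpos z hc' hzr
      linarith
    have hiv := intermediate_value_Icc hzb.le
      (hcont.mono (Set.Icc_subset_Icc (le_trans hξ0 hzl.le) hb1.le))
    have h0mem : (0:ℝ) ∈ Set.Icc (g z) (g b) := ⟨h.le, hgb.le⟩
    obtain ⟨c, hcmem, hgc⟩ := hiv h0mem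
    have hcS : c ∈ S :=
      ⟨⟨le_trans (le_trans hξ0 hzl.le) hcmem.1, lt_of_le_of_lt hcmem.2 hb1⟩, hgc⟩
    have := le_csSup hbdd hcS
    linarith [hcmem.1]
end

section
/- Let φ : [0,1] → ℝ be continuous and concave with φ(0) ≤ 0 and φ(1) = 0, and suppose φ has a derivative L at 1 within [0,1] with L < 0. Then the set S := {z ∈ [0,1) : φ(z) = 0} is nonempty, its supremum ξ̄ := sup S satisfies ξ̄ < 1 and φ(ξ̄) = 0, φ(z) > 0 for every z ∈ (ξ̄, 1), and φ(z) < 0 for every z ∈ [0, ξ̄). -/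
theorem stmt7 (φ : ℝ → ℝ) (hcont : ContinuousOn φ (Set.Icc 0 1))
    (hconc : ConcaveOn ℝ (Set.Icc 0 1) φ)
    (h0 : φ 0 ≤ 0) (h1 : φ 1 = 0)
    (L : ℝ) (hL : HasDerivWithinAt φ L (Set.Icc 0 1) 1) (hLneg : L < 0) :
    {z ∈ Set.Ico (0:ℝ) 1 | φ z = 0}.Nonempty ∧
    sSup {z ∈ Set.Ico (0:ℝ) 1 | φ z = 0} < 1 ∧
    φ (sSup {z ∈ Set.Ico (0:ℝ) 1 | φ z = 0}) = 0 ∧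
    (∀ z ∈ Set.Ioo (sSup {z ∈ Set.Ico (0:ℝ) 1 | φ z = 0}) 1, 0 < φ z) ∧
    ∀ z ∈ Set.Ico (0:ℝ) (sSup {z ∈ Set.Ico (0:ℝ) 1 | φ z = 0}), φ z < 0 := by
  set S := {z ∈ Set.Ico (0:ℝ) 1 | φ z = 0} with hSdef
  -- positivity near 1
  obtain ⟨δ, hδ0, hδ1, hpos⟩ : ∃ δ > 0, δ ≤ (1:ℝ) ∧ ∀ t, 1 - δ < t → t < 1 → 0 < φ t := by
    rw [hasDerivWithinAt_iff_tendsto_slope] at hL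
    have h := hL (Iio_mem_nhds hLneg)
    rw [Filter.mem_map, Metric.mem_nhdsWithin_iff] at h
    obtain ⟨ε, hε, hsub⟩ := h
    refine ⟨min ε 1, by positivity, min_le_right _ _, ?_⟩
    intro t ht1 ht2
    have hmin1 : min ε 1 ≤ 1 := min_le_right _ _
    have hminε : min ε 1 ≤ ε := min_le_left _ _
    have ht0 : (0:ℝ) ≤ t := by linarith
    have htball : t ∈ Metric.ball (1:ℝ) ε := by
      rw [Metric.mem_ball, Real.dist_eq, abs_of_nonpos (by linarith)]
      linarith
    have htmem : t ∈ Set.Icc (0:ℝ) 1 \ {1} := ⟨⟨ht0, le_of_lt ht2⟩, by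
      simp only [Set.mem_singleton_iff]; linarith⟩
    have hslope : slope φ 1 t < 0 := hsub ⟨htball, htmem⟩
    rw [slope_def_field] at hslope
    have : (φ t - φ 1) / (t - 1) < 0 := by
      simpa [div_eq_inv_mul] using hslope
    rw [div_neg_iff] at this
    rcases this with ⟨ha, hb⟩ | ⟨_, hb⟩
    · linarith
    · linarith
  -- concavity inequality between points
  have key : ∀ x ∈ Set.Icc (0:ℝ) 1, ∀ y ∈ Set.Icc (0:ℝ) 1, ∀ s, x ≤ s → s ≤ y → x < y →
      ((y - s)/(y - x)) * φ x + ((s - x)/(y - x)) * φ y ≤ φ s := by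
    intro x hx y hy s hxs hsy hxy
    have hne : y - x ≠ 0 := by linarith
    have ha : (0:ℝ) ≤ (y - s)/(y - x) := div_nonneg (by linarith) (by linarith)
    have hb : (0:ℝ) ≤ (s - x)/(y - x) := div_nonneg (by linarith) (by linarith)
    have hab : (y - s)/(y - x) + (s - x)/(y - x) = 1 := by field_simp; ring
    have h := hconc.2 hx hy ha hb hab
    have hs : (y - s)/(y - x) * x + (s - x)/(y - x) * y = s := by
      field_simp; ring
    simpa [smul_eq_mul, hs] using h
  -- S is bounded away from 1
  have hSsub : S ⊆ Set.Icc 0 (1 - δ) := by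
    intro z hz
    obtain ⟨⟨hz0, hz1⟩, hzφ⟩ := hz
    refine ⟨hz0, ?_⟩
    by_contra hcon
    push_neg at hcon
    exact absurd hzφ (ne_of_gt (hpos z hcon hz1))
  -- S nonempty
  have hne : S.Nonempty := by
    rcases eq_or_lt_of_le h0 with h | h
    · exact ⟨0, ⟨by norm_num, by norm_num⟩, h⟩
    · have ht0 : (0:ℝ) < 1 - δ/2 := by linarith
      have hφt : 0 < φ (1 - δ/2) := hpos _ (by linarith) (by linarith)
      have hsub : Set.Icc (0:ℝ) (1 - δ/2) ⊆ Set.Icc 0 1 := Set.Icc_subset_Icc le_rfl (by linarith)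
      obtain ⟨c, hc, hφc⟩ := intermediate_value_Icc (le_of_lt ht0) (hcont.mono hsub)
        (⟨le_of_lt h, le_of_lt hφt⟩ : (0:ℝ) ∈ Set.Icc (φ 0) (φ (1 - δ/2)))
      exact ⟨c, ⟨hc.1, lt_of_le_of_lt hc.2 (by linarith)⟩, hφc⟩
  -- S is closed hence compact
  have hSeq : S = Set.Icc 0 (1 - δ) ∩ φ ⁻¹' {0} := by
    ext z
    constructor
    · intro hz
      exact ⟨hSsub hz, hz.2⟩
    · rintro ⟨⟨hz0, hz1⟩, hzφ⟩
      exact ⟨⟨hz0, by linarith⟩, hzφ⟩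
  have hScl : IsClosed S := by
    rw [hSeq]
    exact ContinuousOn.preimage_isClosed_of_isClosed
      (hcont.mono (Set.Icc_subset_Icc le_rfl (by linarith))) isClosed_Icc isClosed_singleton
  have hScomp : IsCompact S :=
    IsCompact.of_isClosed_subset isCompact_Icc hScl hSsub
  have hmem : sSup S ∈ S := hScomp.sSup_mem hne
  obtain ⟨⟨hξ0, hξ1⟩, hξφ⟩ := hmem
  have hξδ : sSup S ≤ 1 - δ := (hSsub ⟨⟨hξ0, hξ1⟩, hξφ⟩).2
  have hbdd : BddAbove S := ⟨1 - δ, fun z hz => (hSsub hz).2⟩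
  -- positivity on (ξ, 1)
  have hposmid : ∀ z ∈ Set.Ioo (sSup S) 1, 0 < φ z := by
    rintro z ⟨hz1, hz2⟩
    have hk := key (sSup S) ⟨hξ0, le_of_lt hξ1⟩ 1 (by norm_num) z (le_of_lt hz1)
      (le_of_lt hz2) hξ1
    rw [hξφ, h1] at hk
    simp only [mul_zero, add_zero] at hk
    rcases lt_or_eq_of_le hk with h | h
    · exact h
    · exfalso
      have hzS : z ∈ S := ⟨⟨by linarith, hz2⟩, h.symm⟩
      exact absurd (le_csSup hbdd hzS) (not_le_of_gt hz1)
  refine ⟨hne, by linarith, hξφ, hposmid, ?_⟩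
  -- negativity on [0, ξ)
  rintro z ⟨hz0, hzξ⟩
  by_contra hcon
  push_neg at hcon
  set t := (sSup S + 1)/2 with ht
  have htξ : sSup S < t := by rw [ht]; linarith
  have ht1 : t < 1 := by rw [ht]; linarith
  have hφt : 0 < φ t := hposmid t ⟨htξ, ht1⟩
  have hk := key z ⟨hz0, by linarith⟩ t ⟨by linarith, le_of_lt ht1⟩ (sSup S)
    (le_of_lt hzξ) (le_of_lt htξ) (by linarith)
  rw [hξφ] at hk
  have hc1 : 0 ≤ (t - sSup S)/(t - z) * φ z :=
    mul_nonneg (div_nonneg (by linarith) (by linarith)) hcon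
  have hc2 : 0 < (sSup S - z)/(t - z) * φ t :=
    mul_pos (div_pos (by linarith) (by linarith)) hφt
  linarith
end

section
/- Let p : ℕ → [0,∞) with ∑_{s} p_s = 1 and λ := ∑_{s} s p_s < ∞, let τ : ℕ → [0,1], and let π ∈ (0,1]. Assume the cascade condition π ∑_{s} s(s−1) p_s τ_s > λ holds. Then for every z ∈ [0,1): ∑_{s} p_s (1 − τ_s) + ∑_{s} p_s τ_s (1 − π + π z)^{s} < 1. -/
theorem stmt8 (p : ℕ → ℝ) (hp : ∀ s, 0 ≤ p s) (hpsum : Summable p)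
    (hp1 : ∑' s : ℕ, p s = 1)
    (hlamsum : Summable fun s : ℕ => (s : ℝ) * p s)
    (τ : ℕ → ℝ) (hτ : ∀ s, τ s ∈ Set.Icc (0:ℝ) 1)
    (π : ℝ) (hπ : π ∈ Set.Ioc (0:ℝ) 1)
    (hsum2 : Summable fun s : ℕ => (s : ℝ) * ((s : ℝ) - 1) * p s * τ s)
    (hcasc : (∑' s : ℕ, (s : ℝ) * p s) <
      π * ∑' s : ℕ, (s : ℝ) * ((s : ℝ) - 1) * p s * τ s) :
    ∀ z ∈ Set.Ico (0:ℝ) 1,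
      (∑' s : ℕ, p s * (1 - τ s)) + (∑' s : ℕ, p s * τ s * (1 - π + π * z) ^ s) < 1 := by
  intro z hz
  obtain ⟨hz0, hz1⟩ := hz
  obtain ⟨hπ0, hπ1⟩ := hπ
  set w : ℝ := 1 - π + π * z with hw
  have hw0 : 0 ≤ w := by nlinarith
  have hw1 : w < 1 := by nlinarith
  have hτ0 : ∀ s, 0 ≤ τ s := fun s => (hτ s).1
  have hτ1 : ∀ s, τ s ≤ 1 := fun s => (hτ s).2
  -- summability facts
  have hsτ : Summable (fun s : ℕ => p s * τ s) := by
    apply hpsum.of_nonneg_of_le (fun s => mul_nonneg (hp s) (hτ0 s))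
    intro s
    calc p s * τ s ≤ p s * 1 := mul_le_mul_of_nonneg_left (hτ1 s) (hp s)
    _ = p s := mul_one _
  have hsτw : Summable (fun s : ℕ => p s * τ s * w ^ s) := by
    apply hsτ.of_nonneg_of_le
      (fun s => mul_nonneg (mul_nonneg (hp s) (hτ0 s)) (pow_nonneg hw0 s))
    intro s
    calc p s * τ s * w ^ s ≤ p s * τ s * 1 :=
          mul_le_mul_of_nonneg_left (pow_le_one₀ hw0 hw1.le)
            (mul_nonneg (hp s) (hτ0 s))
    _ = p s * τ s := mul_one _
  have hs1τ : Summable (fun s : ℕ => p s * (1 - τ s)) := by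
    have := hpsum.sub hsτ
    convert this using 2 with s
    show p s * (1 - τ s) = p s - p s * τ s
    ring
    rfl
  -- find an index with strict inequality
  have hterm_nonneg : ∀ s : ℕ, 0 ≤ (s : ℝ) * ((s : ℝ) - 1) * p s * τ s := by
    intro s
    rcases Nat.eq_zero_or_pos s with h | h
    · simp [h]
    · have : (1:ℝ) ≤ (s:ℝ) := by exact_mod_cast h
      have h1 : 0 ≤ (s:ℝ) * ((s:ℝ) - 1) := mul_nonneg (by positivity) (by linarith)
      exact mul_nonneg (mul_nonneg h1 (hp s)) (hτ0 s)
  have hlamnn : 0 ≤ ∑' s : ℕ, (s : ℝ) * p s :=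
    tsum_nonneg fun s => mul_nonneg (Nat.cast_nonneg s) (hp s)
  have hSpos : 0 < ∑' s : ℕ, (s : ℝ) * ((s : ℝ) - 1) * p s * τ s := by
    by_contra h
    push_neg at h
    have : 0 ≤ ∑' s : ℕ, (s : ℝ) * ((s : ℝ) - 1) * p s * τ s := tsum_nonneg hterm_nonneg
    nlinarith
  have hex : ∃ s : ℕ, 0 < (s : ℝ) * ((s : ℝ) - 1) * p s * τ s := by
    by_contra h
    push_neg at h
    have : ∀ s : ℕ, (s : ℝ) * ((s : ℝ) - 1) * p s * τ s = 0 :=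
      fun s => le_antisymm (h s) (hterm_nonneg s)
    rw [tsum_congr this, tsum_zero] at hSpos
    exact lt_irrefl 0 hSpos
  obtain ⟨s₀, hs₀⟩ := hex
  have hs₀ne : s₀ ≠ 0 := by rintro rfl; simp at hs₀
  have hpτpos : 0 < p s₀ * τ s₀ := by
    rcases (mul_nonneg (hp s₀) (hτ0 s₀)).lt_or_eq with h | h
    · exact h
    · exfalso; rw [mul_assoc] at hs₀; rw [← h] at hs₀; simp at hs₀
  -- strict tsum inequality
  have hstrict : (∑' s : ℕ, p s * τ s * w ^ s) < ∑' s : ℕ, p s * τ s := by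
    apply Summable.tsum_lt_tsum (i := s₀) ?_ ?_ hsτw hsτ
    · intro s
      calc p s * τ s * w ^ s ≤ p s * τ s * 1 :=
            mul_le_mul_of_nonneg_left (pow_le_one₀ hw0 hw1.le)
              (mul_nonneg (hp s) (hτ0 s))
      _ = p s * τ s := mul_one _
    · have : w ^ s₀ < 1 := pow_lt_one₀ hw0 hw1 hs₀ne
      nlinarith
  have hsplit : (∑' s : ℕ, p s * (1 - τ s)) + (∑' s : ℕ, p s * τ s) = 1 := by
    have hc : ∑' s : ℕ, (p s * (1 - τ s) + p s * τ s) = ∑' s : ℕ, p s :=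
      tsum_congr fun s => by ring
    rw [← Summable.tsum_add hs1τ hsτ, hc, hp1]
  linarith
end

section
/- Let p : ℕ → [0,∞) satisfy ∑_{r} p_r = 1, ∑_{r} r² p_r < ∞, and ∑_{r} r(r−2) p_r > 0. Then: (a) for every q with 1/3 < q ≤ 1, ∑_{r : r < 1/q} r(r−1) p_r < ∑_{r} r p_r; consequently (b) the contagion threshold q_c := sup{ q ∈ (0,1) : ∑_{r : r < 1/q} r(r−1) p_r > ∑_{r} r p_r } satisfies q_c ≤ 1/3. -/
theorem stmt9 (p : ℕ → ℝ) (hp : ∀ r, 0 ≤ p r) (hpsum : Summable p)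
    (hp1 : ∑' r : ℕ, p r = 1)
    (h2 : Summable fun r : ℕ => (r : ℝ) ^ 2 * p r)
    (hpos : 0 < ∑' r : ℕ, (r : ℝ) * ((r : ℝ) - 2) * p r) :
    -- (a)
    (∀ q : ℝ, 1/3 < q → q ≤ 1 →
      (∑' r : ℕ, (if (r : ℝ) < 1/q then (r : ℝ) * ((r : ℝ) - 1) * p r else 0)) <
        ∑' r : ℕ, (r : ℝ) * p r) ∧
    -- (b)
    sSup {q : ℝ | q ∈ Set.Ioo (0:ℝ) 1 ∧
        (∑' r : ℕ, (r : ℝ) * p r) <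
          ∑' r : ℕ, (if (r : ℝ) < 1/q then (r : ℝ) * ((r : ℝ) - 1) * p r else 0)} ≤ 1/3 := by
  -- summability of r * p r
  have hf : Summable (fun r : ℕ => (r : ℝ) * p r) := by
    apply Summable.of_nonneg_of_le (fun r => mul_nonneg (Nat.cast_nonneg r) (hp r))
      (fun r => ?_) (h2.add hpsum)
    have h0 := hp r
    nlinarith [sq_nonneg ((r : ℝ) - 1)]
  -- summability of r (r-2) p r
  have hh : Summable (fun r : ℕ => (r : ℝ) * ((r : ℝ) - 2) * p r) := by
    have heq : (fun r : ℕ => (r : ℝ) * ((r : ℝ) - 2) * p r)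
        = fun r : ℕ => (r : ℝ) ^ 2 * p r - 2 * ((r : ℝ) * p r) := by
      funext r; ring
    rw [heq]; exact h2.sub (hf.mul_left 2)
  set u : ℕ → ℝ := fun r => if 3 ≤ r then (r : ℝ) * ((r : ℝ) - 2) * p r else 0 with hu_def
  have hu_nonneg : ∀ r, 0 ≤ u r := by
    intro r
    simp only [hu_def]
    split
    · next h =>
      have h3 : (3 : ℝ) ≤ (r : ℝ) := by exact_mod_cast h
      exact mul_nonneg (mul_nonneg (Nat.cast_nonneg r) (by linarith)) (hp r)
    · exact le_rfl
  have he : HasSum (fun r : ℕ => if r = 1 then p 1 else 0) (p 1) := hasSum_ite_eq 1 (p 1)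
  have hkey : (fun r : ℕ => (r : ℝ) * ((r : ℝ) - 2) * p r
      + (if r = 1 then p 1 else 0)) = u := by
    funext r
    simp only [hu_def]
    rcases r with _ | _ | _ | n
    · norm_num
    · norm_num
    · norm_num
    · have h1 : ¬ (n + 3 = 1) := by omega
      have h2' : 3 ≤ n + 3 := by omega
      simp [h1, h2']
  have hu_sum : Summable u := by
    rw [← hkey]; exact hh.add he.summable
  have hu_tsum : (∑' r, u r)
      = (∑' r : ℕ, (r : ℝ) * ((r : ℝ) - 2) * p r) + p 1 := by
    rw [← hkey, Summable.tsum_add hh he.summable, he.tsum_eq]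
  have hu_pos : 0 < ∑' r, u r := by
    rw [hu_tsum]
    have := hp 1
    linarith
  -- there exists r₀ ≥ 3 with p r₀ > 0
  have hex : ∃ r₀ : ℕ, 3 ≤ r₀ ∧ 0 < p r₀ := by
    by_contra hcon
    push_neg at hcon
    have : ∀ r, u r = 0 := by
      intro r
      simp only [hu_def]
      split
      · next h =>
        have := hcon r h
        have hp0 : p r = 0 := le_antisymm this (hp r)
        rw [hp0]; ring
      · rfl
    rw [tsum_congr this, tsum_zero] at hu_pos
    exact lt_irrefl _ hu_pos
  obtain ⟨r₀, hr₀3, hpr₀⟩ := hex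
  -- key: 2 * p 2 < ∑ r p r
  have hkey2 : 2 * p 2 < ∑' r : ℕ, (r : ℝ) * p r := by
    have hne : (2 : ℕ) ≠ r₀ := by omega
    have hsum : ∑ r ∈ ({2, r₀} : Finset ℕ), (r : ℝ) * p r
        ≤ ∑' r : ℕ, (r : ℝ) * p r :=
      Summable.sum_le_tsum _ (fun r _ => mul_nonneg (Nat.cast_nonneg r) (hp r)) hf
    rw [Finset.sum_pair hne] at hsum
    push_cast at hsum
    have h3 : (3 : ℝ) ≤ (r₀ : ℝ) := by exact_mod_cast hr₀3
    have hpos' : 0 < (r₀ : ℝ) * p r₀ := mul_pos (by linarith) hpr₀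
    linarith
  -- part (a)
  have parta : ∀ q : ℝ, 1/3 < q → q ≤ 1 →
      (∑' r : ℕ, (if (r : ℝ) < 1/q then (r : ℝ) * ((r : ℝ) - 1) * p r else 0)) <
        ∑' r : ℕ, (r : ℝ) * p r := by
    intro q hq13 hq1
    have hq0 : 0 < q := by linarith
    have hinv : 1 / q < 3 := by
      rw [div_lt_iff₀ hq0]; linarith
    have htsum : (∑' r : ℕ, (if (r : ℝ) < 1/q then (r : ℝ) * ((r : ℝ) - 1) * p r else 0))
        = (if (2 : ℝ) < 1/q then (2 : ℝ) * ((2 : ℝ) - 1) * p 2 else 0) := by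
      have := tsum_eq_sum (f := fun r : ℕ =>
          (if (r : ℝ) < 1/q then (r : ℝ) * ((r : ℝ) - 1) * p r else 0))
        (L := SummationFilter.unconditional ℕ) (s := {2}) (by
          intro r hr
          simp only [Finset.mem_singleton] at hr
          rcases lt_or_ge r 2 with h | h
          · interval_cases r <;> simp
          · have hr3 : 3 ≤ r := by omega
            have h3 : ¬ ((r : ℝ) < 1/q) := by
              push_neg
              have : (3 : ℝ) ≤ (r : ℝ) := by exact_mod_cast hr3
              linarith
            simp only [one_div] at h3 ⊢
            simp [h3])
      rw [this]
      simp
    rw [htsum]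
    split
    · next _ =>
      norm_num
      linarith
    · next _ =>
      have := hp 2
      linarith
  refine ⟨parta, ?_⟩
  apply Real.sSup_le
  · rintro q ⟨⟨hq0, hq1⟩, hlt⟩
    by_contra hcon
    push_neg at hcon
    have := parta q hcon (le_of_lt hq1)
    linarith
  · norm_num
end

section
/- Let a : ℝ → ℝ, λ > 0, π ∈ (0,1], and ξ ∈ [0,1) be such that u := 1 − π(1 − ξ) > 0 and a is differentiable at u. Define Φ(z, ρ) := λ z (1 − ρ(1 − z)) − a(1 − ρ(1 − z)). If the function z ↦ Φ(z, π) has derivative 0 at z = ξ, then the function ρ ↦ Φ(ξ, ρ) has derivative at ρ = π equal to (λ/π)(1 − ξ)(1 − π(1 − ξ)), and this quantity is strictly positive. -/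
theorem stmt12 (a : ℝ → ℝ) (lam : ℝ) (hlam : 0 < lam)
    (π : ℝ) (hπ : π ∈ Set.Ioc (0:ℝ) 1) (ξ : ℝ) (hξ : ξ ∈ Set.Ico (0:ℝ) 1)
    (hu : 0 < 1 - π * (1 - ξ)) (ha : DifferentiableAt ℝ a (1 - π * (1 - ξ)))
    (hcrit : HasDerivAt (fun z => lam * z * (1 - π * (1 - z)) - a (1 - π * (1 - z))) 0 ξ) :
    HasDerivAt (fun ρ => lam * ξ * (1 - ρ * (1 - ξ)) - a (1 - ρ * (1 - ξ)))
      (lam / π * (1 - ξ) * (1 - π * (1 - ξ))) π ∧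
    0 < lam / π * (1 - ξ) * (1 - π * (1 - ξ)) := by
  obtain ⟨hπ0, hπ1⟩ := hπ
  obtain ⟨hξ0, hξ1⟩ := hξ
  set u := 1 - π * (1 - ξ) with hudef
  set d := deriv a u with hd
  have had : HasDerivAt a d u := ha.hasDerivAt
  -- inner function for the z-variable
  have hinner : HasDerivAt (fun z : ℝ => 1 - π * (1 - z)) π ξ := by
    have : HasDerivAt (fun z : ℝ => 1 - π * (1 - z)) (0 - π * (0 - 1)) ξ := by
      exact (hasDerivAt_const ξ (1:ℝ)).sub (((hasDerivAt_const ξ (1:ℝ)).sub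
        (hasDerivAt_id ξ)).const_mul π)
    simpa using this
  have hz : HasDerivAt (fun z => lam * z * (1 - π * (1 - z)) - a (1 - π * (1 - z)))
      (lam * u + lam * ξ * π - d * π) ξ := by
    have h1 : HasDerivAt (fun z : ℝ => lam * z) lam ξ := by
      simpa using (hasDerivAt_id ξ).const_mul lam
    have h2 := (h1.mul hinner)
    have h3 := had.comp ξ hinner
    simpa [hudef, mul_comm, mul_left_comm, mul_assoc, add_comm, Pi.mul_def, Pi.sub_def, Function.comp_def] using h2.sub h3
  have hzero : lam * u + lam * ξ * π - d * π = 0 := hz.unique hcrit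
  have hdval : d = lam * u / π + lam * ξ := by
    field_simp
    linarith
  -- ρ-derivative
  have hinner2 : HasDerivAt (fun ρ : ℝ => 1 - ρ * (1 - ξ)) (-(1 - ξ)) π := by
    have : HasDerivAt (fun ρ : ℝ => 1 - ρ * (1 - ξ)) (0 - 1 * (1 - ξ)) π := by
      exact (hasDerivAt_const π (1:ℝ)).sub ((hasDerivAt_id π).mul_const (1 - ξ))
    simpa using this
  have hρ : HasDerivAt (fun ρ => lam * ξ * (1 - ρ * (1 - ξ)) - a (1 - ρ * (1 - ξ)))
      (lam * ξ * (-(1 - ξ)) - d * (-(1 - ξ))) π := by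
    have h1 := hinner2.const_mul (lam * ξ)
    have h2 := had.comp π hinner2
    simpa [hudef, mul_comm, mul_left_comm, mul_assoc, Pi.sub_def, Function.comp_def] using h1.sub h2
  have hval : lam * ξ * (-(1 - ξ)) - d * (-(1 - ξ)) = lam / π * (1 - ξ) * u := by
    rw [hdval]; field_simp; ring
  constructor
  · rw [← hval]; exact hρ
  · exact mul_pos (mul_pos (div_pos hlam hπ0) (by linarith)) hu
end
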